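/- Let T : 𝕋 → 𝕋 be an orientation-preserving Lipschitz expanding map, F a flower with pre-image selector τ, and f : 𝕋 → ℝ Lipschitz. If φ : 𝕋 → ℝ is Lipschitz and f + φ − φ∘T is constant on F, then the series Σ_{n≥1} (f∘τⁿ)' converges in L^∞(𝕋) and φ' = Σ_{n≥1} (f∘τⁿ)' Lebesgue-a.e. -/

import Mathlib

open Filter MeasureTheory Set Topology
open scoped ENNReal NNReal

noncomputable section

/-- The circle `𝕋 = ℝ/ℤ`, with its quotient metric and normalised Lebesgue (Haar) measure. -/
abbrev 𝕋 := UnitAddCircle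

/-- The representative in `[0,1)` of a point of the circle. -/
def rep01 (z : 𝕋) : ℝ := ((AddCircle.equivIco 1 0) z : ℝ)

/-- The representative in `[-1/2,1/2)` of a point of the circle. -/
def repSym (z : 𝕋) : ℝ := ((AddCircle.equivIco 1 (-(1/2))) z : ℝ)

/-- The length of the positively oriented (counterclockwise) arc from `a` to `b`. -/
def arcLen (a b : 𝕋) : ℝ := rep01 (b - a)

/-- The closed positively oriented arc (closed interval) from `a` to `b`. -/
def arc (a b : 𝕋) : Set 𝕋 := (fun t : ℝ => a + (t : 𝕋)) '' Set.Icc 0 (arcLen a b)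

/-- The open positively oriented arc (open interval) from `a` to `b`. -/
def openArc (a b : 𝕋) : Set 𝕋 := (fun t : ℝ => a + (t : 𝕋)) '' Set.Ioo 0 (arcLen a b)

/-- `T` is expanding with constant `K`: nearby points have their distance
multiplied by at least `K`. -/
def ExpandingWith (T : 𝕋 → 𝕋) (K : ℝ) : Prop :=
  ∃ ε : ℝ, 0 < ε ∧ ∀ x y : 𝕋, dist x y < ε → K * dist x y ≤ dist (T x) (T y)

/-- `T` is a (continuous) expanding map of the circle. -/
def Expanding (T : 𝕋 → 𝕋) : Prop :=
  Continuous T ∧ ∃ K : ℝ, 1 < K ∧ ExpandingWith T K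

/-- `G : ℝ → ℝ` is a (continuous) lift of the circle map `T`. -/
def IsLift (T : 𝕋 → 𝕋) (G : ℝ → ℝ) : Prop :=
  Continuous G ∧ ∀ t : ℝ, T ((t : ℝ) : 𝕋) = ((G t : ℝ) : 𝕋)

/-- The circle map `T` has degree `k`. -/
def HasDegree (T : 𝕋 → 𝕋) (k : ℤ) : Prop :=
  ∃ G : ℝ → ℝ, IsLift T G ∧ ∀ t : ℝ, G (t + 1) = G t + k

/-- A Lipschitz self-map of the circle. -/
def LipschitzCirc (T : 𝕋 → 𝕋) : Prop := ∃ C : ℝ≥0, LipschitzWith C T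

/-- A real-valued Lipschitz function on the circle. -/
def LipschitzReal (f : 𝕋 → ℝ) : Prop := ∃ C : ℝ≥0, LipschitzWith C f

/-- An orientation-preserving expanding map of the circle (degree `k ≥ 2`). -/
def OPExpanding (T : 𝕋 → 𝕋) : Prop :=
  Expanding T ∧ ∃ k : ℤ, 2 ≤ k ∧ HasDegree T k

/-- An orientation-preserving Lipschitz expanding map of the circle. -/
def OPLExpanding (T : 𝕋 → 𝕋) : Prop :=
  Expanding T ∧ LipschitzCirc T ∧ ∃ k : ℤ, 2 ≤ k ∧ HasDegree T k

/-- The right-hand limit `lim_{z ↘ x} τ(z)` of `τ` at `x`. -/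
def rightLim (τ : 𝕋 → 𝕋) (x : 𝕋) : 𝕋 :=
  limUnder (𝓝[>] (0:ℝ)) (fun t : ℝ => τ (x + (t : 𝕋)))

/-- The left-hand limit `lim_{z ↗ x} τ(z)` of `τ` at `x`. -/
def leftLim (τ : 𝕋 → 𝕋) (x : 𝕋) : 𝕋 :=
  limUnder (𝓝[<] (0:ℝ)) (fun t : ℝ => τ (x + (t : 𝕋)))

/-- `τ` is a pre-image selector for `T`, with (finite) set `D` of discontinuities:
`τ x ∈ T⁻¹(x)` for all `x`, `τ` is continuous off `D`, and each point of `D` is a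
jump discontinuity of `τ` (both one-sided limits exist, are distinct, and `τ x`
equals one of them). -/
def IsPreimageSelector (T τ : 𝕋 → 𝕋) (D : Finset 𝕋) : Prop :=
  (∀ x : 𝕋, T (τ x) = x) ∧
  (∀ x : 𝕋, x ∉ D → ContinuousAt τ x) ∧
  (∀ x ∈ D, ¬ ContinuousAt τ x ∧
    ∃ yl yr : 𝕋, yl ≠ yr ∧
      Tendsto (fun t : ℝ => τ (x + (t : 𝕋))) (𝓝[<] (0:ℝ)) (𝓝 yl) ∧
      Tendsto (fun t : ℝ => τ (x + (t : 𝕋))) (𝓝[>] (0:ℝ)) (𝓝 yr) ∧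
      (τ x = yl ∨ τ x = yr))

/-- `F` is a `p`-flower for `T`: the closure of the image of a pre-image selector
for `T` having exactly `p ≥ 1` discontinuities. -/
def IsPFlower (T : 𝕋 → 𝕋) (p : ℕ) (F : Set 𝕋) : Prop :=
  1 ≤ p ∧ ∃ τ : 𝕋 → 𝕋, ∃ D : Finset 𝕋,
    IsPreimageSelector T τ D ∧ D.card = p ∧ F = closure (Set.range τ)

/-- The discontinuity `x₁` of `τ` which is smallest with respect to the
counterclockwise order based at `0`. -/
def firstDisc (D : Finset 𝕋) : 𝕋 :=
  if h : ∃ x, x ∈ D ∧ ∀ y ∈ D, arcLen 0 x ≤ arcLen 0 y then h.choose else 0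

/-- The base point `y₁`: the pre-image of the first discontinuity `x₁` which is a
left endpoint of a petal (i.e. the right-hand limit of `τ` at `x₁`). -/
def basePt (τ : 𝕋 → 𝕋) (D : Finset 𝕋) : 𝕋 := rightLim τ (firstDisc D)

/-- The discontinuity `x` belongs to the set `A`, i.e. `y(x)` precedes `y'(x)` in
the counterclockwise order based at `y₁`. -/
def inA (τ : 𝕋 → 𝕋) (D : Finset 𝕋) (x : 𝕋) : Prop :=
  arcLen (basePt τ D) (rightLim τ x) < arcLen (basePt τ D) (leftLim τ x)

open Classical in
/-- The interval `I_x` associated to a discontinuity `x` of `τ`: the arc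
`[y(x), y'(x)]` if `y(x)` precedes `y'(x)` in the order based at `y₁`,
and the arc `[y'(x), y(x)]` otherwise. -/
def Iint (τ : 𝕋 → 𝕋) (D : Finset 𝕋) (x : 𝕋) : Set 𝕋 :=
  if inA τ D x then arc (rightLim τ x) (leftLim τ x) else arc (leftLim τ x) (rightLim τ x)

open Classical in
/-- The complementary interval `J_x`. -/
def Jint (τ : 𝕋 → 𝕋) (D : Finset 𝕋) (x : 𝕋) : Set 𝕋 :=
  if inA τ D x then arc (leftLim τ x) (rightLim τ x) else arc (rightLim τ x) (leftLim τ x)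

/-- The function `Σ_{n ≥ 0} χ(τⁿ(S))`; for `S = I_x` this is the function `e_x`. -/
def escapeSum (τ : 𝕋 → 𝕋) (S : Set 𝕋) (z : 𝕋) : ℝ :=
  ∑' n : ℕ, Set.indicator (τ^[n] '' S) (fun _ => (1:ℝ)) z

/-- The escape time function of a set `F`: `e_F(t) = inf {n ≥ 0 : Tⁿ(t) ∉ F}`,
written as `Σ_{n ≥ 0} χ{z : T^m z ∈ F for all m ≤ n}`. -/
def escapeTime (T : 𝕋 → 𝕋) (F : Set 𝕋) (z : 𝕋) : ℝ :=
  ∑' n : ℕ, Set.indicator {w : 𝕋 | ∀ m ≤ n, T^[m] w ∈ F} (fun _ => (1:ℝ)) z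

/-- `f : 𝕋 → ℝ` has derivative `d` at `x`. -/
def HasDerivCirc (f : 𝕋 → ℝ) (x : 𝕋) (d : ℝ) : Prop :=
  HasDerivAt (fun t : ℝ => f (x + (t : 𝕋))) d 0

/-- The (a.e. defined) derivative `f'` of a function `f : 𝕋 → ℝ`. -/
def derivCirc (f : 𝕋 → ℝ) (x : 𝕋) : ℝ :=
  deriv (fun t : ℝ => f (x + (t : 𝕋))) 0

/-- `U : 𝕋 → 𝕋` has derivative `d` at `x`. -/
def HasDerivCircMap (U : 𝕋 → 𝕋) (x : 𝕋) (d : ℝ) : Prop :=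
  HasDerivAt (fun t : ℝ => repSym (U (x + (t : 𝕋)) - U x)) d 0

/-- The (a.e. defined) derivative `U'` of a circle map `U : 𝕋 → 𝕋`. -/
def derivCircMap (U : 𝕋 → 𝕋) (x : 𝕋) : ℝ :=
  deriv (fun t : ℝ => repSym (U (x + (t : 𝕋)) - U x)) 0

/-- The Lipschitz function `φ` flattens `f` on `F`:
`f + φ - φ∘T` restricted to `F` is a constant. -/
def FlattensWith (T : 𝕋 → 𝕋) (f : 𝕋 → ℝ) (F : Set 𝕋) (φ : 𝕋 → ℝ) : Prop :=
  ∃ c : ℝ, ∀ z ∈ F, f z + φ z - φ (T z) = c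

/-- `f` can be Lipschitz flattened on `F`: there is a Lipschitz `φ : 𝕋 → ℝ` such
that the restriction of `f + φ - φ∘T` to `F` is constant. -/
def LipFlattenedOn (T : 𝕋 → 𝕋) (f : 𝕋 → ℝ) (F : Set 𝕋) : Prop :=
  ∃ φ : 𝕋 → ℝ, LipschitzReal φ ∧ FlattensWith T f F φ

/-- The topological support of a Borel measure on the circle. -/
def measSupport (μ : Measure 𝕋) : Set 𝕋 :=
  {x : 𝕋 | ∀ U : Set 𝕋, IsOpen U → x ∈ U → 0 < μ U}

/-- The set `G` carries the measure `μ`: the topological support of `μ` is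
contained in `G`. -/
def Carries (G : Set 𝕋) (μ : Measure 𝕋) : Prop := measSupport μ ⊆ G

/-- A `T`-invariant Borel probability measure. -/
def InvariantProb (T : 𝕋 → 𝕋) (μ : Measure 𝕋) : Prop :=
  IsProbabilityMeasure μ ∧ μ.map T = μ

/-- A Sturmian measure: a `T`-invariant Borel probability measure carried by some
`1`-flower. -/
def Sturmian (T : 𝕋 → 𝕋) (μ : Measure 𝕋) : Prop :=
  InvariantProb T μ ∧ ∃ F : Set 𝕋, IsPFlower T 1 F ∧ Carries F μ

/-- The maximum ergodic average `α(f) = max_{μ ∈ M} ∫ f dμ`. -/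
def maxErgAvg (T : 𝕋 → 𝕋) (f : 𝕋 → ℝ) : ℝ :=
  sSup ((fun μ : Measure 𝕋 => ∫ z, f z ∂μ) '' {μ : Measure 𝕋 | InvariantProb T μ})

/-- `μ` is an `f`-maximizing measure. -/
def IsMaximizing (T : 𝕋 → 𝕋) (f : 𝕋 → ℝ) (μ : Measure 𝕋) : Prop :=
  InvariantProb T μ ∧ ∫ z, f z ∂μ = maxErgAvg T f

/-- `μ` is supported on a periodic orbit of `T`. -/
def SupportedOnPeriodicOrbit (T : 𝕋 → 𝕋) (μ : Measure 𝕋) : Prop :=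
  ∃ x : 𝕋, ∃ n : ℕ, 0 < n ∧ T^[n] x = x ∧
    measSupport μ ⊆ Set.range (fun m : ℕ => T^[m] x)

end

noncomputable section AuxFDS
open Metric

lemma fds_coe_lip : LipschitzWith 1 ((↑) : ℝ → 𝕋) := by
  apply LipschitzWith.of_dist_le_mul
  intro x y
  rw [dist_eq_norm, dist_eq_norm, ← AddCircle.coe_sub, NNReal.coe_one, one_mul]
  exact QuotientAddGroup.norm_mk_le_norm

instance fds_noAtoms : MeasureTheory.NullSingletonClass (volume : Measure 𝕋) := by
  constructor
  intro x
  have h := AddCircle.volume_closedBall (T := 1) (x := x) 0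
  simpa [Metric.closedBall_zero] using h

lemma fds_abs_deriv_le {g : ℝ → ℝ} {x c δ : ℝ} (hδ : 0 < δ) (hc : 0 ≤ c)
    (hb : ∀ y, |y - x| < δ → |g y - g x| ≤ c * |y - x|) : |deriv g x| ≤ c := by
  by_cases hdiff : DifferentiableAt ℝ g x
  · have hd := hdiff.hasDerivAt
    rw [hasDerivAt_iff_tendsto_slope] at hd
    apply le_of_tendsto hd.abs
    have hev : ∀ᶠ y in 𝓝 x, |y - x| < δ := by
      have := Metric.ball_mem_nhds x hδ
      filter_upwards [this] with y hy
      simpa [Real.dist_eq] using hy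
    filter_upwards [self_mem_nhdsWithin, eventually_nhdsWithin_of_eventually_nhds hev]
      with y hy hy'
    have hyx : y - x ≠ 0 := sub_ne_zero.2 hy
    rw [slope_def_field, abs_div, div_le_iff₀ (abs_pos.mpr hyx)]
    exact hb y hy'
  · rw [deriv_zero_of_not_differentiableAt hdiff, abs_zero]; exact hc

lemma fds_ae_diff {H : ℝ → ℝ} {N : Set ℝ} (hN : volume N = 0)
    (hH : ∀ x, x ∉ N → ∃ c : ℝ≥0, ∃ δ : ℝ, 0 < δ ∧ LipschitzOnWith c H (ball x δ)) :
    ∀ᵐ x : ℝ, DifferentiableAt ℝ H x := by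
  set U : Set ℝ := {x | ∃ c : ℝ≥0, ∃ δ : ℝ, 0 < δ ∧ LipschitzOnWith c H (ball x δ)} with hU
  have hUdata : ∀ x ∈ U, ∃ (c : ℝ≥0) (δ : ℝ), 0 < δ ∧ LipschitzOnWith c H (ball x δ) :=
    fun x hx => hx
  choose! c δ hδ hlip using hUdata
  have hcov : ∀ x ∈ U, ball x (δ x) ∈ 𝓝[U] x := fun x hx =>
    nhdsWithin_le_nhds (ball_mem_nhds x (hδ x hx))
  obtain ⟨t, htU, htc, hcover⟩ := TopologicalSpace.countable_cover_nhdsWithin hcov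
  have hae : ∀ y ∈ t, ∀ᵐ x : ℝ, x ∈ ball y (δ y) → DifferentiableAt ℝ H x := by
    intro y hy
    filter_upwards [(hlip y (htU hy)).ae_differentiableWithinAt_of_mem] with x hx hxball
    exact (hx hxball).differentiableAt (isOpen_ball.mem_nhds hxball)
  have h1 : ∀ᵐ x : ℝ, ∀ y ∈ t, x ∈ ball y (δ y) → DifferentiableAt ℝ H x :=
    (ae_ball_iff htc).mpr hae
  have h2 : ∀ᵐ x : ℝ, x ∉ N := by
    rw [ae_iff]; simpa using hN
  filter_upwards [h1, h2] with x hx hxN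
  obtain ⟨y, hyt, hxy⟩ := by
    have hxU : x ∈ U := hH x hxN
    have := hcover hxU
    rw [Set.mem_iUnion₂] at this
    exact this
  exact hx y hyt hxy

lemma fds_rep01_coe {x : ℝ} (hx : x ∈ Ico (0:ℝ) 1) : rep01 ((x : ℝ) : 𝕋) = x := by
  have hx' : x ∈ Ico (0:ℝ) (0+1) := by simpa using hx
  have h : (AddCircle.equivIco 1 0) ((x : ℝ) : 𝕋) = ⟨x, hx'⟩ := by
    rw [Equiv.apply_eq_iff_eq_symm_apply]; rfl
  simp [rep01, h]

lemma fds_coe_rep01 (z : 𝕋) : ((rep01 z : ℝ) : 𝕋) = z :=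
  (AddCircle.equivIco 1 0).symm_apply_apply z

lemma fds_measurable_rep01 : Measurable rep01 :=
  measurable_subtype_coe.comp (AddCircle.measurableEquivIco 1 0).measurable

lemma fds_ae_lift {P : ℝ → Prop} (hP : MeasurableSet {x | P x}) (h : ∀ᵐ x : ℝ, P x) :
    ∀ᵐ z : 𝕋, P (rep01 z) := by
  have hmeas : MeasurableSet {z : 𝕋 | ¬ P (rep01 z)} := by
    have he : {z : 𝕋 | ¬ P (rep01 z)} = rep01 ⁻¹' {x | P x}ᶜ := rfl
    rw [he]; exact fds_measurable_rep01 hP.compl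
  rw [ae_iff]
  have hmp := UnitAddCircle.measurePreserving_mk 0
  rw [← hmp.map_eq, Measure.map_apply AddCircle.measurable_mk' hmeas,
    Measure.restrict_apply (AddCircle.measurable_mk' hmeas)]
  refine measure_mono_null ?_ (measure_union_null (by simpa [ae_iff] using h)
    (measure_singleton (1:ℝ)))
  rintro x ⟨hx1, hx2⟩
  rcases lt_or_eq_of_le hx2.2 with hlt | heq
  · left
    have hr : rep01 ((x : ℝ) : 𝕋) = x := fds_rep01_coe ⟨hx2.1.le, by linarith⟩
    simpa [hr] using hx1
  · right; simpa using heq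


end AuxFDS

set_option maxHeartbeats 2000000 in
/-- **Theorem.** If `φ` is Lipschitz and `f + φ - φ∘T` is constant on the flower
`F = closure(range τ)`, then the series `Σ_{n≥1} (f∘τⁿ)'` converges in `L^∞(𝕋)` and
`φ' = Σ_{n≥1} (f∘τⁿ)'` Lebesgue-a.e. -/
theorem flattening_deriv_series
    (T τ : 𝕋 → 𝕋) (D : Finset 𝕋)
    (hT : OPLExpanding T) (hτ : IsPreimageSelector T τ D) (hD : D.Nonempty)
    (f : 𝕋 → ℝ) (hf : LipschitzReal f)
    (φ : 𝕋 → ℝ) (hφ : LipschitzReal φ)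
    (hconst : FlattensWith T f (closure (Set.range τ)) φ) :
    Filter.Tendsto (fun N : ℕ =>
        eLpNorm (fun z : 𝕋 =>
          (∑ n ∈ Finset.range N, derivCirc (f ∘ τ^[n + 1]) z)
            - ∑' n : ℕ, derivCirc (f ∘ τ^[n + 1]) z) ⊤ volume)
      Filter.atTop (nhds 0) ∧
    ∀ᵐ z : 𝕋, derivCirc φ z = ∑' n : ℕ, derivCirc (f ∘ τ^[n + 1]) z := by
  classical
  obtain ⟨⟨hTc, K, hK, ε, hε, hexp⟩, _, _⟩ := hT
  obtain ⟨hTτ, hτcont, _⟩ := hτ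
  obtain ⟨Cf, hCf⟩ := hf
  obtain ⟨Cφ, hCφ⟩ := hφ
  obtain ⟨c, hc⟩ := hconst
  have hK0 : (0:ℝ) < K := lt_trans one_pos hK
  set r : ℝ := K⁻¹ with hrdef
  have hr0 : 0 < r := inv_pos.mpr hK0
  have hr1 : r < 1 := inv_lt_one_of_one_lt₀ hK
  set rn : ℝ≥0 := ⟨r, hr0.le⟩ with hrn
  -- τ is injective
  have hinj : Function.Injective τ := fun a b hab => by
    rw [← hTτ a, ← hTτ b, hab]
  -- local contraction at continuity points
  have hstep : ∀ x : 𝕋, x ∉ D → ∃ δ : ℝ, 0 < δ ∧ ∀ y y' : 𝕋, dist y x < δ → dist y' x < δ →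
      dist (τ y) (τ y') ≤ r * dist y y' := by
    intro x hx
    obtain ⟨δ, hδ, hcont⟩ := Metric.continuousAt_iff.mp (hτcont x hx) (ε/3) (by linarith)
    refine ⟨δ, hδ, fun y y' hy hy' => ?_⟩
    have h1 : dist (τ y) (τ x) < ε/3 := hcont hy
    have h2 : dist (τ y') (τ x) < ε/3 := hcont hy'
    have h3 : dist (τ y) (τ y') < ε := by
      calc dist (τ y) (τ y') ≤ dist (τ y) (τ x) + dist (τ y') (τ x) := dist_triangle_right _ _ _
      _ < ε/3 + ε/3 := by linarith
      _ < ε := by linarith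
    have h4 := hexp (τ y) (τ y') h3
    rw [hTτ, hTτ] at h4
    calc dist (τ y) (τ y') = K⁻¹ * (K * dist (τ y) (τ y')) := by field_simp
    _ ≤ K⁻¹ * dist y y' := by
        exact mul_le_mul_of_nonneg_left h4 (inv_nonneg.mpr hK0.le)
  -- iterated contraction
  have hiter : ∀ n : ℕ, ∀ z : 𝕋, (∀ j, j < n → τ^[j] z ∉ D) →
      ∃ δ : ℝ, 0 < δ ∧ ∀ y y' : 𝕋, dist y z < δ → dist y' z < δ →
        dist (τ^[n] y) (τ^[n] y') ≤ r^n * dist y y' := by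
    intro n
    induction n with
    | zero => exact fun z _ => ⟨1, one_pos, fun y y' _ _ => by simp⟩
    | succ n ih =>
      intro z hz
      obtain ⟨δ₁, hδ₁, h₁⟩ := ih z (fun j hj => hz j (Nat.lt_succ_of_lt hj))
      obtain ⟨δ₂, hδ₂, h₂⟩ := hstep (τ^[n] z) (hz n (Nat.lt_succ_self n))
      refine ⟨min δ₁ δ₂, lt_min hδ₁ hδ₂, fun y y' hy hy' => ?_⟩
      have hrn1 : r^n ≤ 1 := pow_le_one₀ hr0.le hr1.le
      have hyb : dist (τ^[n] y) (τ^[n] z) < δ₂ := by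
        have := h₁ y z (lt_of_lt_of_le hy (min_le_left _ _)) (by simpa using hδ₁)
        calc dist (τ^[n] y) (τ^[n] z) ≤ r^n * dist y z := this
        _ ≤ 1 * dist y z := by
            exact mul_le_mul_of_nonneg_right hrn1 dist_nonneg
        _ < δ₂ := by rw [one_mul]; exact lt_of_lt_of_le hy (min_le_right _ _)
      have hyb' : dist (τ^[n] y') (τ^[n] z) < δ₂ := by
        have := h₁ y' z (lt_of_lt_of_le hy' (min_le_left _ _)) (by simpa using hδ₁)
        calc dist (τ^[n] y') (τ^[n] z) ≤ r^n * dist y' z := this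
        _ ≤ 1 * dist y' z := mul_le_mul_of_nonneg_right hrn1 dist_nonneg
        _ < δ₂ := by rw [one_mul]; exact lt_of_lt_of_le hy' (min_le_right _ _)
      rw [Function.iterate_succ_apply', Function.iterate_succ_apply']
      calc dist (τ (τ^[n] y)) (τ (τ^[n] y'))
          ≤ r * dist (τ^[n] y) (τ^[n] y') := h₂ _ _ hyb hyb'
      _ ≤ r * (r^n * dist y y') := by
          refine mul_le_mul_of_nonneg_left ?_ hr0.le
          exact h₁ y y' (lt_of_lt_of_le hy (min_le_left _ _))
            (lt_of_lt_of_le hy' (min_le_left _ _))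
      _ = r^(n+1) * dist y y' := by ring
  -- a.e. every iterate avoids D
  have hGoodae : ∀ᵐ z : 𝕋, ∀ j : ℕ, τ^[j] z ∉ D := by
    rw [ae_all_iff]
    intro j
    rw [ae_iff]
    have hfin : (τ^[j] ⁻¹' (↑D : Set 𝕋)).Finite :=
      Set.Finite.preimage ((hinj.iterate j).injOn) D.finite_toSet
    refine measure_mono_null (fun z hz => ?_) (hfin.measure_zero volume)
    simpa using hz
  -- lift functions to ℝ
  set HQ : ℕ → ℝ → ℝ := fun n x => f (τ^[n] ((x : ℝ) : 𝕋)) with hHQ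
  set PH : ℕ → ℝ → ℝ := fun n x => φ (τ^[n] ((x : ℝ) : 𝕋)) with hPH
  -- countable fibers of the projection
  have hfiber : ∀ w : 𝕋, Set.Countable {x : ℝ | ((x : ℝ) : 𝕋) = w} := by
    intro w
    apply Set.Countable.mono ?_ (Set.countable_range (fun k : ℤ => rep01 w + k))
    intro x hx
    have h0 : ((x - rep01 w : ℝ) : 𝕋) = 0 := by
      rw [AddCircle.coe_sub, fds_coe_rep01 w]
      simp [hx.out]
    obtain ⟨k, hk⟩ := (AddCircle.coe_eq_zero_iff (1:ℝ)).mp h0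
    refine ⟨k, ?_⟩
    simp only [zsmul_eq_mul, mul_one] at hk
    simp only []
    linarith
  -- the bad set on ℝ for level n
  have hbadcnt : Set.Countable {x : ℝ | ∃ j : ℕ, τ^[j] ((x : ℝ) : 𝕋) ∈ D} := by
    have hsub : {x : ℝ | ∃ j : ℕ, τ^[j] ((x : ℝ) : 𝕋) ∈ D} ⊆
        ⋃ j : ℕ, ⋃ d ∈ (↑D : Set 𝕋), {x : ℝ | τ^[j] ((x : ℝ) : 𝕋) = d} := by
      rintro x ⟨j, hd⟩
      exact Set.mem_iUnion.mpr ⟨j, Set.mem_biUnion hd rfl⟩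
    apply Set.Countable.mono hsub
    apply Set.countable_iUnion
    intro j
    apply Set.Countable.biUnion D.countable_toSet
    intro d _
    by_cases hw : ∃ w, τ^[j] w = d
    · obtain ⟨w, hww⟩ := hw
      apply Set.Countable.mono ?_ (hfiber w)
      intro x hx
      exact (hinj.iterate j) (hx.out.trans hww.symm)
    · have : {x : ℝ | τ^[j] ((x : ℝ) : 𝕋) = d} = ∅ := by
        ext x; simp only [Set.mem_setOf_eq, Set.mem_empty_iff_false, iff_false]
        exact fun h => hw ⟨_, h⟩
      rw [this]; exact Set.countable_empty
  have hbadnull : volume {x : ℝ | ∃ j : ℕ, τ^[j] ((x : ℝ) : 𝕋) ∈ D} = 0 :=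
    hbadcnt.measure_zero volume
  -- local Lipschitz property of the lifts at good points
  have hlift : ∀ (g : 𝕋 → ℝ) (Cg : ℝ≥0), LipschitzWith Cg g → ∀ n : ℕ, ∀ x : ℝ,
      (∀ j : ℕ, τ^[j] ((x : ℝ) : 𝕋) ∉ D) →
      ∃ δ : ℝ, 0 < δ ∧ ∀ y y' : ℝ, |y - x| < δ → |y' - x| < δ →
        |g (τ^[n] ((y : ℝ) : 𝕋)) - g (τ^[n] ((y' : ℝ) : 𝕋))| ≤ (Cg : ℝ) * r^n * |y - y'| := by
    intro g Cg hg n x hx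
    obtain ⟨δ, hδ, hδ2⟩ := hiter n ((x : ℝ) : 𝕋) (fun j _ => hx j)
    refine ⟨δ, hδ, fun y y' hy hy' => ?_⟩
    have hcy : dist ((y : ℝ) : 𝕋) ((x : ℝ) : 𝕋) < δ := by
      refine lt_of_le_of_lt ?_ hy
      simpa [Real.dist_eq] using fds_coe_lip.dist_le_mul y x
    have hcy' : dist ((y' : ℝ) : 𝕋) ((x : ℝ) : 𝕋) < δ := by
      refine lt_of_le_of_lt ?_ hy'
      simpa [Real.dist_eq] using fds_coe_lip.dist_le_mul y' x
    have h1 : dist (τ^[n] ((y : ℝ) : 𝕋)) (τ^[n] ((y' : ℝ) : 𝕋))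
        ≤ r^n * dist ((y : ℝ) : 𝕋) ((y' : ℝ) : 𝕋) := hδ2 _ _ hcy hcy'
    have h2 : dist ((y : ℝ) : 𝕋) ((y' : ℝ) : 𝕋) ≤ |y - y'| := by
      simpa [Real.dist_eq] using fds_coe_lip.dist_le_mul y y'
    calc |g (τ^[n] ((y : ℝ) : 𝕋)) - g (τ^[n] ((y' : ℝ) : 𝕋))|
        = dist (g (τ^[n] ((y : ℝ) : 𝕋))) (g (τ^[n] ((y' : ℝ) : 𝕋))) := (Real.dist_eq _ _).symm
    _ ≤ (Cg : ℝ) * dist (τ^[n] ((y : ℝ) : 𝕋)) (τ^[n] ((y' : ℝ) : 𝕋)) := hg.dist_le_mul _ _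
    _ ≤ (Cg : ℝ) * (r^n * dist ((y : ℝ) : 𝕋) ((y' : ℝ) : 𝕋)) := by
        exact mul_le_mul_of_nonneg_left h1 Cg.coe_nonneg
    _ ≤ (Cg : ℝ) * (r^n * |y - y'|) := by
        refine mul_le_mul_of_nonneg_left ?_ Cg.coe_nonneg
        exact mul_le_mul_of_nonneg_left h2 (pow_nonneg hr0.le n)
    _ = (Cg : ℝ) * r^n * |y - y'| := by ring
  -- a.e. differentiability of the lifts, for each n
  have hdiffR : ∀ n : ℕ, ∀ᵐ x : ℝ, DifferentiableAt ℝ (HQ n) x ∧ DifferentiableAt ℝ (PH n) x := by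
    intro n
    have hH : ∀ᵐ x : ℝ, DifferentiableAt ℝ (HQ n) x := by
      apply fds_ae_diff hbadnull
      intro x hx
      have hx' : ∀ j : ℕ, τ^[j] ((x : ℝ) : 𝕋) ∉ D := fun j hj => hx ⟨j, hj⟩
      obtain ⟨δ, hδ, hd⟩ := hlift f Cf hCf n x hx'
      refine ⟨Cf * rn^n, δ, hδ, ?_⟩
      rw [lipschitzOnWith_iff_dist_le_mul]
      intro y hy y' hy'
      rw [Metric.mem_ball, Real.dist_eq] at hy hy'
      rw [Real.dist_eq, Real.dist_eq]
      have := hd y y' hy hy'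
      refine le_trans this (le_of_eq ?_)
      push_cast
      rfl
    have hP : ∀ᵐ x : ℝ, DifferentiableAt ℝ (PH n) x := by
      apply fds_ae_diff hbadnull
      intro x hx
      have hx' : ∀ j : ℕ, τ^[j] ((x : ℝ) : 𝕋) ∉ D := fun j hj => hx ⟨j, hj⟩
      obtain ⟨δ, hδ, hd⟩ := hlift φ Cφ hCφ n x hx'
      refine ⟨Cφ * rn^n, δ, hδ, ?_⟩
      rw [lipschitzOnWith_iff_dist_le_mul]
      intro y hy y' hy'
      rw [Metric.mem_ball, Real.dist_eq] at hy hy'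
      rw [Real.dist_eq, Real.dist_eq]
      have := hd y y' hy hy'
      refine le_trans this (le_of_eq ?_)
      push_cast
      rfl
    exact hH.and hP
  -- transfer differentiability to the circle
  have hdiffT : ∀ᵐ z : 𝕋, ∀ n : ℕ,
      DifferentiableAt ℝ (HQ n) (rep01 z) ∧ DifferentiableAt ℝ (PH n) (rep01 z) := by
    rw [ae_all_iff]
    intro n
    apply fds_ae_lift ?_ (hdiffR n)
    have : {x : ℝ | DifferentiableAt ℝ (HQ n) x ∧ DifferentiableAt ℝ (PH n) x}
        = {x | DifferentiableAt ℝ (HQ n) x} ∩ {x | DifferentiableAt ℝ (PH n) x} := rfl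
    rw [this]
    exact (measurableSet_of_differentiableAt ℝ (HQ n)).inter
      (measurableSet_of_differentiableAt ℝ (PH n))
    -- telescoping identity
  have hbase : ∀ w : 𝕋, φ w = f (τ w) + φ (τ w) - c := by
    intro w
    have h := hc (τ w) (subset_closure (Set.mem_range_self w))
    rw [hTτ] at h
    linarith
  have htel : ∀ (N : ℕ) (z : 𝕋),
      φ z = (∑ m ∈ Finset.range N, (f (τ^[m+1] z) - c)) + φ (τ^[N] z) := by
    intro N z
    induction N with
    | zero => simp
    | succ N ih =>
      rw [Finset.sum_range_succ]
      have hit : τ^[N+1] z = τ (τ^[N] z) := Function.iterate_succ_apply' τ N z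
      rw [hit]
      have hb := hbase (τ^[N] z)
      linarith
  -- main pointwise estimates
  have hmain : ∀ᵐ z : 𝕋,
      (∀ n : ℕ, |derivCirc (f ∘ τ^[n+1]) z| ≤ (Cf : ℝ) * r^(n+1)) ∧
      (∀ N : ℕ, |derivCirc φ z - ∑ n ∈ Finset.range N, derivCirc (f ∘ τ^[n+1]) z|
        ≤ (Cφ : ℝ) * r^N) := by
    filter_upwards [hGoodae, hdiffT] with z hzD hzdiff
    set x : ℝ := rep01 z with hxdef
    have hx : ((x : ℝ) : 𝕋) = z := fds_coe_rep01 z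
    have hxgood : ∀ j : ℕ, τ^[j] ((x : ℝ) : 𝕋) ∉ D := by rw [hx]; exact fun j => hzD j
    have hfun : ∀ (g : 𝕋 → ℝ) (n : ℕ),
        (fun t : ℝ => (g ∘ τ^[n]) (z + ((t : ℝ) : 𝕋)))
          = (fun t : ℝ => g (τ^[n] (((x + t : ℝ)) : 𝕋))) := by
      intro g n
      funext t
      rw [← hx, ← AddCircle.coe_add]
      rfl
    have hderivH : ∀ n : ℕ, derivCirc (f ∘ τ^[n]) z = deriv (HQ n) x := by
      intro n
      rw [derivCirc, hfun f n]
      have he : (fun t : ℝ => f (τ^[n] (((x + t : ℝ)) : 𝕋))) = (fun t => HQ n (x + t)) := rfl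
      rw [he, deriv_comp_const_add, add_zero]
    have hderivP : ∀ n : ℕ, derivCirc (φ ∘ τ^[n]) z = deriv (PH n) x := by
      intro n
      rw [derivCirc, hfun φ n]
      have he : (fun t : ℝ => φ (τ^[n] (((x + t : ℝ)) : 𝕋))) = (fun t => PH n (x + t)) := rfl
      rw [he, deriv_comp_const_add, add_zero]
    have hbdH : ∀ n : ℕ, |deriv (HQ n) x| ≤ (Cf : ℝ) * r^n := by
      intro n
      obtain ⟨δ, hδ, hd⟩ := hlift f Cf hCf n x hxgood
      exact fds_abs_deriv_le hδ (by positivity) (fun y hy => hd y x hy (by simpa using hδ))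
    have hbdP : ∀ n : ℕ, |deriv (PH n) x| ≤ (Cφ : ℝ) * r^n := by
      intro n
      obtain ⟨δ, hδ, hd⟩ := hlift φ Cφ hCφ n x hxgood
      exact fds_abs_deriv_le hδ (by positivity) (fun y hy => hd y x hy (by simpa using hδ))
    have hkey : ∀ N : ℕ, deriv (PH 0) x
        = (∑ m ∈ Finset.range N, deriv (HQ (m+1)) x) + deriv (PH N) x := by
      intro N
      have hs : HasDerivAt (fun y : ℝ => (∑ m ∈ Finset.range N, (HQ (m+1) y - c)) + PH N y)
          ((∑ m ∈ Finset.range N, deriv (HQ (m+1)) x) + deriv (PH N) x) x := by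
        apply HasDerivAt.add
        · exact HasDerivAt.fun_sum fun m _ => ((hzdiff (m+1)).1.hasDerivAt.sub_const c)
        · exact (hzdiff N).2.hasDerivAt
      have hfe : (PH 0) = fun y : ℝ => (∑ m ∈ Finset.range N, (HQ (m+1) y - c)) + PH N y := by
        funext y
        exact htel N ((y : ℝ) : 𝕋)
      calc deriv (PH 0) x
          = deriv (fun y : ℝ => (∑ m ∈ Finset.range N, (HQ (m+1) y - c)) + PH N y) x := by
            rw [← hfe]
      _ = (∑ m ∈ Finset.range N, deriv (HQ (m+1)) x) + deriv (PH N) x := hs.deriv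
    constructor
    · intro n
      rw [hderivH (n+1)]
      exact hbdH (n+1)
    · intro N
      have h1 : derivCirc φ z = deriv (PH 0) x := by
        have h0 := hderivP 0
        have he : φ ∘ τ^[0] = φ := by
          funext w; simp
        rwa [he] at h0
      have h2 : (∑ n ∈ Finset.range N, derivCirc (f ∘ τ^[n+1]) z)
          = ∑ m ∈ Finset.range N, deriv (HQ (m+1)) x :=
        Finset.sum_congr rfl (fun n _ => hderivH (n+1))
      rw [h1, h2, hkey N, add_sub_cancel_left]
      exact hbdP N
  -- conclusion from the pointwise estimates
  have hb_sum : Summable (fun n : ℕ => (Cf : ℝ) * r * r^n) :=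
    (summable_geometric_of_lt_one hr0.le hr1).mul_left _
  set CC : ℝ := (Cf : ℝ) * r * (1-r)⁻¹ with hCC
  have hconc : ∀ z : 𝕋,
      (∀ n : ℕ, |derivCirc (f ∘ τ^[n+1]) z| ≤ (Cf : ℝ) * r^(n+1)) →
      (∀ N : ℕ, |derivCirc φ z - ∑ n ∈ Finset.range N, derivCirc (f ∘ τ^[n+1]) z|
        ≤ (Cφ : ℝ) * r^N) →
      (∀ N : ℕ, |(∑ n ∈ Finset.range N, derivCirc (f ∘ τ^[n+1]) z)
          - ∑' n : ℕ, derivCirc (f ∘ τ^[n+1]) z| ≤ CC * r^N)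
        ∧ derivCirc φ z = ∑' n : ℕ, derivCirc (f ∘ τ^[n+1]) z := by
    intro z hA hB
    set u : ℕ → ℝ := fun n => derivCirc (f ∘ τ^[n+1]) z with hu
    have hub : ∀ n, ‖u n‖ ≤ (Cf : ℝ) * r * r^n := by
      intro n
      rw [Real.norm_eq_abs]
      calc |u n| ≤ (Cf : ℝ) * r^(n+1) := hA n
      _ = (Cf : ℝ) * r * r^n := by ring
    have hsum : Summable u := Summable.of_norm_bounded hb_sum hub
    have htail : ∀ N : ℕ, |(∑ n ∈ Finset.range N, u n) - ∑' n, u n| ≤ CC * r^N := by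
      intro N
      have heq := Summable.sum_add_tsum_nat_add (f := u) N hsum
      have h2 : |(∑ n ∈ Finset.range N, u n) - ∑' n, u n| = |∑' i : ℕ, u (i + N)| := by
        rw [← heq, sub_add_cancel_left, abs_neg]
      have hshiftb : Summable (fun i : ℕ => (Cf : ℝ) * r * r^(i+N)) :=
        (summable_nat_add_iff N).mpr hb_sum
      have hshiftn : Summable (fun i : ℕ => ‖u (i + N)‖) :=
        ((summable_nat_add_iff N).mpr hsum).abs
      have h3 : |∑' i : ℕ, u (i + N)| ≤ ∑' i : ℕ, (Cf : ℝ) * r * r^(i+N) := by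
        calc |∑' i : ℕ, u (i + N)| ≤ ∑' i : ℕ, ‖u (i + N)‖ := norm_tsum_le_tsum_norm hshiftn
        _ ≤ ∑' i : ℕ, (Cf : ℝ) * r * r^(i+N) :=
            Summable.tsum_le_tsum (fun i => hub (i + N)) hshiftn hshiftb
      have h4 : (∑' i : ℕ, (Cf : ℝ) * r * r^(i+N)) = CC * r^N := by
        have he : (fun i : ℕ => (Cf : ℝ) * r * r^(i+N)) = fun i : ℕ => ((Cf : ℝ) * r * r^N) * r^i := by
          funext i; ring
        rw [he, tsum_mul_left, tsum_geometric_of_lt_one hr0.le hr1, hCC]; ring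
      rw [h2]
      rw [h4] at h3
      exact h3
    refine ⟨htail, ?_⟩
    have hv : Tendsto (fun N : ℕ => derivCirc φ z - ∑ n ∈ Finset.range N, u n) atTop (𝓝 0) := by
      have hbnd : ∀ N : ℕ,
          ‖derivCirc φ z - ∑ n ∈ Finset.range N, u n‖ ≤ (Cφ : ℝ) * r^N := by
        intro N
        rw [Real.norm_eq_abs]; exact hB N
      have hlim : Tendsto (fun N : ℕ => (Cφ : ℝ) * r^N) atTop (𝓝 0) := by
        have := (tendsto_pow_atTop_nhds_zero_of_lt_one hr0.le hr1).const_mul ((Cφ : ℝ))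
        simpa using this
      exact squeeze_zero_norm hbnd hlim
    have hp1 : Tendsto (fun N : ℕ => ∑ n ∈ Finset.range N, u n) atTop (𝓝 (derivCirc φ z)) := by
      have h5 : Tendsto (fun N : ℕ => derivCirc φ z - (derivCirc φ z - ∑ n ∈ Finset.range N, u n))
          atTop (𝓝 (derivCirc φ z - 0)) := tendsto_const_nhds.sub hv
      simpa using h5
    exact tendsto_nhds_unique hp1 hsum.hasSum.tendsto_sum_nat
  have hboth := hmain.mono (fun z hz => hconc z hz.1 hz.2)
  refine ⟨?_, hboth.mono fun z hz => hz.2⟩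
  have hbound : ∀ N : ℕ, eLpNorm (fun z : 𝕋 =>
      (∑ n ∈ Finset.range N, derivCirc (f ∘ τ^[n + 1]) z)
        - ∑' n : ℕ, derivCirc (f ∘ τ^[n + 1]) z) ⊤ volume ≤ ENNReal.ofReal (CC * r^N) := by
    intro N
    rw [eLpNorm_exponent_top]
    apply eLpNormEssSup_le_of_ae_bound
    filter_upwards [hboth] with z hz
    rw [Real.norm_eq_abs]
    exact hz.1 N
  have hupper : Tendsto (fun N : ℕ => ENNReal.ofReal (CC * r^N)) atTop (𝓝 0) := by
    have h6 : Tendsto (fun N : ℕ => CC * r^N) atTop (𝓝 0) := by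
      have := (tendsto_pow_atTop_nhds_zero_of_lt_one hr0.le hr1).const_mul CC
      simpa using this
    have := ENNReal.tendsto_ofReal h6
    simpa using this
  exact tendsto_of_tendsto_of_tendsto_of_le_of_le tendsto_const_nhds hupper
    (fun N => zero_le) hbound
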